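/- The dynamic mechanism induced by any bank account mechanism satisfying (IC), (BI), and (BU) is dynamic incentive compatible (DIC) and ex-post individually rational (eP-IR). -/

import Mathlib

open Finset

namespace DynAuction

/-- A full matrix of (reported or true) values: one value per period and buyer. -/
abbrev Val (k T : ℕ) := Fin T → Fin k → ℝ

/-- A setting: finite nonnegative value spaces and full-support pmfs,
independent across buyers and periods. -/
structure Setting (k T : ℕ) where
  V : Fin k → Fin T → Finset ℝ
  V_nonempty : ∀ i t, (V i t).Nonempty
  V_nonneg : ∀ i t, ∀ s ∈ V i t, (0 : ℝ) ≤ s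
  f : Fin k → Fin T → ℝ → ℝ
  f_pos : ∀ i t, ∀ s ∈ V i t, 0 < f i t s
  f_sum : ∀ i t, ∑ s ∈ V i t, f i t s = 1

variable {k T : ℕ}

/-- A per-period map (allocation or payment) from report histories. -/
abbrev Mech (k T : ℕ) := Fin T → Val k T → Fin k → ℝ

/-- A per-period map depends only on the reports up to the given period. -/
def PrefixDep (m : Mech k T) : Prop :=
  ∀ (t : Fin T) (h h' : Val k T), (∀ τ : Fin T, τ ≤ t → h τ = h' τ) → m t h = m t h'

def ValidSeq (S : Setting k T) (v : Val k T) : Prop := ∀ t i, v t i ∈ S.V i t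

/-- The finite set of all (valid) value matrices. -/
noncomputable def allSeq (S : Setting k T) : Finset (Val k T) :=
  Fintype.piFinset fun t => Fintype.piFinset fun i => S.V i t

/-- Probability of a full value matrix (independence across buyers and periods). -/
noncomputable def seqProb (S : Setting k T) (v : Val k T) : ℝ :=
  ∏ t, ∏ i, S.f i t (v t i)

/-- The finite set of all value sequences of a single buyer. -/
noncomputable def buyerSeqs (S : Setting k T) (i : Fin k) : Finset (Fin T → ℝ) :=
  Fintype.piFinset fun t => S.V i t

/-- Probability of a single buyer's value sequence. -/
noncomputable def buyerProb (S : Setting k T) (i : Fin k) (w : Fin T → ℝ) : ℝ :=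
  ∏ t, S.f i t (w t)

/-- Period-`t` utility of buyer `i` with true value `vi` under report history `h`. -/
def util (x p : Mech k T) (i : Fin k) (t : Fin T) (vi : ℝ) (h : Val k T) : ℝ :=
  vi * x t h i - p t h i

/-- Replace buyer `i`'s report in period `t` by `r`. -/
def replace (vhat : Val k T) (i : Fin k) (t : Fin T) (r : ℝ) : Val k T :=
  fun τ j => if τ = t ∧ j = i then r else vhat τ j

/-- The report history where buyer `i` reports truthfully (values `w`) after period `t`,
while everything else is as in `vhat`. -/
def blend (i : Fin k) (t : Fin T) (vhat : Val k T) (w : Fin T → ℝ) : Val k T :=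
  fun τ j => if t < τ ∧ j = i then w τ else vhat τ j

/-- Continuation utility of buyer `i` after period `t`: expected utility from periods
`τ > t` assuming buyer `i` reports truthfully from period `t+1` on while the other
buyers' reports are as given in `vhat`. -/
noncomputable def contUtil (S : Setting k T) (x p : Mech k T) (i : Fin k) (t : Fin T)
    (vhat : Val k T) : ℝ :=
  ∑ w ∈ buyerSeqs S i, buyerProb S i w *
    ∑ τ ∈ univ.filter (fun τ : Fin T => t < τ), util x p i τ (w τ) (blend i t vhat w)

/-- Dynamic incentive compatibility. -/
def DIC (S : Setting k T) (x p : Mech k T) : Prop :=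
  ∀ vhat : Val k T, ValidSeq S vhat → ∀ (i : Fin k) (t : Fin T),
    ∀ vi ∈ S.V i t, ∀ r ∈ S.V i t,
      util x p i t vi (replace vhat i t r) + contUtil S x p i t (replace vhat i t r)
        ≤ util x p i t vi (replace vhat i t vi) + contUtil S x p i t (replace vhat i t vi)

/-- Ex-post individual rationality under truthful reporting. -/
def EPIR (S : Setting k T) (x p : Mech k T) : Prop :=
  ∀ v : Val k T, ValidSeq S v → ∀ i : Fin k, 0 ≤ ∑ t, util x p i t (v t i) v

/-- Expected revenue under truthful reporting. -/
noncomputable def revenue (S : Setting k T) (p : Mech k T) : ℝ :=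
  ∑ v ∈ allSeq S, seqProb S v * ∑ t, ∑ i, p t v i

/-- Expected welfare under truthful reporting. -/
noncomputable def welfare (S : Setting k T) (x : Mech k T) : ℝ :=
  ∑ v ∈ allSeq S, seqProb S v * ∑ t, ∑ i, v t i * x t v i

/-! ### Bank account mechanisms -/

/-- A per-period bank-account map: takes the current period's reports and a balance
vector, returns a vector (allocation, payment, or updated balances). -/
abbrev BankMap (k T : ℕ) := Fin T → (Fin k → ℝ) → (Fin k → ℝ) → Fin k → ℝ

def NonnegBal (b : Fin k → ℝ) : Prop := ∀ i, 0 ≤ b i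

def BValid (S : Setting k T) (t : Fin T) (v : Fin k → ℝ) : Prop := ∀ j, v j ∈ S.V j t

/-- Allocation bounds and feasibility for the per-period auctions. -/
def BankFeasible (S : Setting k T) (xB : BankMap k T) : Prop :=
  ∀ (t : Fin T) (v : Fin k → ℝ), BValid S t v → ∀ b : Fin k → ℝ, NonnegBal b →
    (∀ i, 0 ≤ xB t v b i ∧ xB t v b i ≤ 1) ∧ (∑ i, xB t v b i ≤ 1)

/-- (IC): each per-period auction is single-period incentive compatible for each balance. -/
def BankIC (S : Setting k T) (xB pB : BankMap k T) : Prop :=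
  ∀ (t : Fin T) (b : Fin k → ℝ), NonnegBal b → ∀ v : Fin k → ℝ, BValid S t v →
    ∀ (i : Fin k), ∀ r ∈ S.V i t,
      v i * xB t (Function.update v i r) b i - pB t (Function.update v i r) b i
        ≤ v i * xB t v b i - pB t v b i

/-- Expected stage utility of buyer `i` (expectation over buyer `i`'s own value). -/
noncomputable def stageEU (S : Setting k T) (xB pB : BankMap k T) (t : Fin T) (i : Fin k)
    (v : Fin k → ℝ) (b : Fin k → ℝ) : ℝ :=
  ∑ s ∈ S.V i t, S.f i t s *
    (s * xB t (Function.update v i s) b i - pB t (Function.update v i s) b i)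

/-- (BI): the expected stage utility is nonnegative and balance independent. -/
def BankBI (S : Setting k T) (xB pB : BankMap k T) : Prop :=
  ∀ (t : Fin T) (i : Fin k) (v : Fin k → ℝ), (∀ j, j ≠ i → v j ∈ S.V j t) →
    (∀ b b' : Fin k → ℝ, NonnegBal b → NonnegBal b' →
      stageEU S xB pB t i v b = stageEU S xB pB t i v b') ∧
    (∀ b : Fin k → ℝ, NonnegBal b → 0 ≤ stageEU S xB pB t i v b)

/-- (BU): balance update conditions. -/
def BankBU (S : Setting k T) (xB pB buB : BankMap k T) : Prop :=
  ∀ (t : Fin T) (b : Fin k → ℝ), NonnegBal b → ∀ v : Fin k → ℝ, BValid S t v →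
    ∀ i : Fin k,
      0 ≤ buB t v b i ∧ buB t v b i ≤ b i + v i * xB t v b i - pB t v b i

/-- Balances induced recursively by the balance update policy: `balAux n` is the
balance vector at the end of the first `n` periods (`balAux 0 = 0`). -/
noncomputable def balAux (buB : BankMap k T) (v : Val k T) : ℕ → Fin k → ℝ
  | 0 => fun _ => 0
  | n + 1 => if h : n < T then buB ⟨n, h⟩ (v ⟨n, h⟩) (balAux buB v n) else balAux buB v n

/-- The dynamic mechanism induced by a bank account mechanism. -/
noncomputable def induced (mB buB : BankMap k T) : Mech k T :=
  fun t v => mB t (v t) (balAux buB v (t : ℕ))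

/-! ### Auxiliary machinery for the main theorem -/

lemma balAux_congr (buB : BankMap k T) (v v' : Val k T) (n : ℕ)
    (h : ∀ τ : Fin T, (τ : ℕ) < n → v τ = v' τ) :
    balAux buB v n = balAux buB v' n := by
  induction n with
  | zero => rfl
  | succ n ih =>
    have ih' := ih (fun τ hτ => h τ (by omega))
    simp only [balAux]
    split
    · next hn => rw [ih', h ⟨n, hn⟩ (by simp)]
    · exact ih'

lemma balAux_nonneg (S : Setting k T) (xB pB buB : BankMap k T)
    (hBU : BankBU S xB pB buB) (v : Val k T) (hv : ValidSeq S v) :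
    ∀ n, NonnegBal (balAux buB v n) := by
  intro n
  induction n with
  | zero => intro j; exact le_refl 0
  | succ n ih =>
    simp only [balAux]
    split
    · next hn => exact fun j => (hBU ⟨n, hn⟩ _ ih (v ⟨n, hn⟩) (fun j' => hv ⟨n, hn⟩ j') j).1
    · exact ih

lemma mem_buyerSeqs {S : Setting k T} {i : Fin k} {w : Fin T → ℝ} :
    w ∈ buyerSeqs S i ↔ ∀ τ, w τ ∈ S.V i τ := by
  simp [buyerSeqs, Fintype.mem_piFinset]

lemma blend_valid (S : Setting k T) {i : Fin k} {t : Fin T} {vhat : Val k T} {w : Fin T → ℝ}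
    (h : ValidSeq S vhat) (hw : w ∈ buyerSeqs S i) :
    ValidSeq S (blend i t vhat w) := by
  intro τ j
  unfold blend
  split
  · next hc => exact hc.2 ▸ (mem_buyerSeqs.mp hw τ)
  · exact h τ j

lemma replace_valid (S : Setting k T) {i : Fin k} {t : Fin T} {vhat : Val k T} {r : ℝ}
    (h : ValidSeq S vhat) (hr : r ∈ S.V i t) :
    ValidSeq S (replace vhat i t r) := by
  intro τ j
  unfold replace
  split
  · next hc => rw [hc.1, hc.2]; exact hr
  · exact h τ j

/-- Fuel-indexed continuation value recursion: `Fc m n b` is the expected continuation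
utility of buyer `i` from period `n` on (with fuel `m`), when the balance entering period
`n` is `b` and the other buyers report according to `η`. -/
noncomputable def Fc (S : Setting k T) (xB pB buB : BankMap k T) (i : Fin k) (η : Val k T) :
    ℕ → ℕ → (Fin k → ℝ) → ℝ
  | 0, _, _ => 0
  | m + 1, n, b =>
    if h : n < T then
      ∑ s ∈ S.V i ⟨n, h⟩, S.f i ⟨n, h⟩ s *
        ((s * xB ⟨n, h⟩ (Function.update (η ⟨n, h⟩) i s) b i
            - pB ⟨n, h⟩ (Function.update (η ⟨n, h⟩) i s) b i)
          + Fc S xB pB buB i η m (n + 1) (buB ⟨n, h⟩ (Function.update (η ⟨n, h⟩) i s) b))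
    else 0

lemma Fc_eta_congr (S : Setting k T) (xB pB buB : BankMap k T) (i : Fin k)
    (η η' : Val k T) (h : ∀ (τ : Fin T) (j : Fin k), j ≠ i → η τ j = η' τ j) :
    ∀ m n b, Fc S xB pB buB i η m n b = Fc S xB pB buB i η' m n b := by
  intro m
  induction m with
  | zero => intro n b; rfl
  | succ m ih =>
    intro n b
    simp only [Fc]
    split
    · next hn =>
      refine Finset.sum_congr rfl fun s _ => ?_
      have hup : Function.update (η ⟨n, hn⟩) i s = Function.update (η' ⟨n, hn⟩) i s := by
        funext j
        rcases eq_or_ne j i with rfl | hj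
        · simp
        · rw [Function.update_of_ne hj, Function.update_of_ne hj, h _ j hj]
      rw [hup, ih]
    · rfl

lemma Fc_balInd (S : Setting k T) (xB pB buB : BankMap k T)
    (hBI : BankBI S xB pB) (hBU : BankBU S xB pB buB) (i : Fin k) (η : Val k T) :
    ∀ m n, (∀ τ : Fin T, n ≤ (τ : ℕ) → ∀ j, j ≠ i → η τ j ∈ S.V j τ) →
      ∀ b b', NonnegBal b → NonnegBal b' →
        Fc S xB pB buB i η m n b = Fc S xB pB buB i η m n b' := by
  intro m
  induction m with
  | zero => intro n _ b b' _ _; rfl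
  | succ m ih =>
    intro n hval b b' hb hb'
    simp only [Fc]
    split
    · next hn =>
      set N : Fin T := ⟨n, hn⟩ with hN
      have e : ∀ c : Fin k → ℝ,
          (∑ s ∈ S.V i N, S.f i N s *
            ((s * xB N (Function.update (η N) i s) c i - pB N (Function.update (η N) i s) c i)
              + Fc S xB pB buB i η m (n + 1) (buB N (Function.update (η N) i s) c)))
          = stageEU S xB pB N i (η N) c
            + ∑ s ∈ S.V i N, S.f i N s *
                Fc S xB pB buB i η m (n + 1) (buB N (Function.update (η N) i s) c) := by
        intro c
        rw [stageEU, ← Finset.sum_add_distrib]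
        exact Finset.sum_congr rfl fun s _ => by ring
      rw [e b, e b']
      have hNval : ∀ j, j ≠ i → η N j ∈ S.V j N := fun j hj => hval N le_rfl j hj
      congr 1
      · exact (hBI N i (η N) hNval).1 b b' hb hb'
      · refine Finset.sum_congr rfl fun s hs => ?_
        congr 1
        have hvalid : BValid S N (Function.update (η N) i s) := by
          intro j
          rcases eq_or_ne j i with rfl | hj
          · simpa using hs
          · rw [Function.update_of_ne hj]; exact hNval j hj
        exact ih (n + 1) (fun τ hτ j hj => hval τ (by omega) j hj) _ _
          (fun j => (hBU N b hb _ hvalid j).1) (fun j => (hBU N b' hb' _ hvalid j).1)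
    · rfl

lemma update_mem_buyerSeqs {S : Setting k T} {i : Fin k} {w : Fin T → ℝ}
    (hw : w ∈ buyerSeqs S i) {N : Fin T} {s : ℝ} (hs : s ∈ S.V i N) :
    Function.update w N s ∈ buyerSeqs S i := by
  rw [mem_buyerSeqs] at *
  intro τ
  rcases eq_or_ne τ N with rfl | h
  · simpa
  · rw [Function.update_of_ne h]; exact hw τ

lemma prob_update (S : Setting k T) (i : Fin k) (N : Fin T) (w : Fin T → ℝ) (s : ℝ) :
    buyerProb S i (Function.update w N s) * S.f i N (w N)
      = S.f i N s * buyerProb S i w := by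
  unfold buyerProb
  have h1 : ∏ τ, S.f i τ (Function.update w N s τ)
      = S.f i N s * ∏ τ ∈ univ.erase N, S.f i τ (w τ) := by
    rw [← Finset.mul_prod_erase univ (fun τ => S.f i τ (Function.update w N s τ)) (mem_univ N)]
    congr 1
    · rw [Function.update_self]
    · exact Finset.prod_congr rfl fun τ hτ => by
        rw [Function.update_of_ne (Finset.ne_of_mem_erase hτ)]
  have h2 : ∏ τ, S.f i τ (w τ) = S.f i N (w N) * ∏ τ ∈ univ.erase N, S.f i τ (w τ) :=
    (Finset.mul_prod_erase univ (fun τ => S.f i τ (w τ)) (mem_univ N)).symm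
  rw [h1, h2]; ring

lemma resample (S : Setting k T) (i : Fin k) (N : Fin T)
    (g : ℝ → (Fin T → ℝ) → ℝ)
    (hg : ∀ s a w, g s (Function.update w N a) = g s w) :
    ∑ w ∈ buyerSeqs S i, buyerProb S i w * ∑ s ∈ S.V i N, S.f i N s * g s w
      = ∑ w ∈ buyerSeqs S i, buyerProb S i w * g (w N) w := by
  have step1 : ∑ w ∈ buyerSeqs S i, buyerProb S i w * ∑ s ∈ S.V i N, S.f i N s * g s w
      = ∑ p ∈ (buyerSeqs S i) ×ˢ (S.V i N),
          buyerProb S i p.1 * (S.f i N p.2 * g p.2 (Function.update p.1 N p.2)) := by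
    rw [Finset.sum_product]
    refine Finset.sum_congr rfl fun w _ => ?_
    rw [Finset.mul_sum]
    exact Finset.sum_congr rfl fun s _ => by rw [hg]
  have step2 : ∑ p ∈ (buyerSeqs S i) ×ˢ (S.V i N),
          buyerProb S i p.1 * (S.f i N p.2 * g p.2 (Function.update p.1 N p.2))
      = ∑ q ∈ (buyerSeqs S i) ×ˢ (S.V i N),
          S.f i N q.2 * (buyerProb S i q.1 * g (q.1 N) q.1) := by
    refine Finset.sum_nbij' (fun p => (Function.update p.1 N p.2, p.1 N))
      (fun q => (Function.update q.1 N q.2, q.1 N)) ?_ ?_ ?_ ?_ ?_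
    · rintro ⟨w, s⟩ hp
      rw [Finset.mem_product] at hp ⊢
      exact ⟨update_mem_buyerSeqs hp.1 hp.2, mem_buyerSeqs.mp hp.1 N⟩
    · rintro ⟨w, s⟩ hp
      rw [Finset.mem_product] at hp ⊢
      exact ⟨update_mem_buyerSeqs hp.1 hp.2, mem_buyerSeqs.mp hp.1 N⟩
    · rintro ⟨w, s⟩ _
      simp [Function.update_idem, Function.update_self, Function.update_eq_self]
    · rintro ⟨w, s⟩ _
      simp [Function.update_idem, Function.update_self, Function.update_eq_self]
    · rintro ⟨w, s⟩ _
      simp only [Function.update_self]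
      have h := prob_update S i N w s
      linear_combination (-(g s (Function.update w N s))) * h
  have step3 : ∑ q ∈ (buyerSeqs S i) ×ˢ (S.V i N),
          S.f i N q.2 * (buyerProb S i q.1 * g (q.1 N) q.1)
      = ∑ w ∈ buyerSeqs S i, buyerProb S i w * g (w N) w := by
    rw [Finset.sum_product]
    refine Finset.sum_congr rfl fun w _ => ?_
    trans ∑ y ∈ S.V i N, S.f i N y * (buyerProb S i w * g (w N) w)
    · rfl
    rw [← Finset.sum_mul, S.f_sum i N, one_mul]
  rw [step1, step2, step3]


lemma key (S : Setting k T) (xB pB buB : BankMap k T)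
    (i : Fin k) (t : Fin T) (η : Val k T) :
    ∀ m n, n + m = T → (t : ℕ) < n →
    ∑ w ∈ buyerSeqs S i, buyerProb S i w *
        ∑ τ ∈ univ.filter (fun τ : Fin T => n ≤ (τ : ℕ)),
          util (induced xB buB) (induced pB buB) i τ (w τ) (blend i t η w)
      = ∑ w ∈ buyerSeqs S i, buyerProb S i w *
          Fc S xB pB buB i η m n (balAux buB (blend i t η w) n) := by
  intro m
  induction m with
  | zero =>
    intro n hn _
    have hempty : univ.filter (fun τ : Fin T => n ≤ (τ : ℕ)) = ∅ :=
      Finset.filter_false_of_mem (fun τ _ => by have := τ.isLt; omega)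
    simp [hempty, Fc]
  | succ m ih =>
    intro n hn ht
    have hnT : n < T := by omega
    set N : Fin T := ⟨n, hnT⟩ with hNdef
    have htN : t < N := by
      rw [Fin.lt_def]; exact ht
    set x := induced xB buB with hx
    set p := induced pB buB with hp
    set B : (Fin T → ℝ) → Fin k → ℝ := fun w => balAux buB (blend i t η w) n with hB
    set g : ℝ → (Fin T → ℝ) → ℝ := fun s w =>
      (s * xB N (Function.update (η N) i s) (B w) i
        - pB N (Function.update (η N) i s) (B w) i)
      + Fc S xB pB buB i η m (n + 1) (buB N (Function.update (η N) i s) (B w)) with hgdef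
    have hBupd : ∀ w a, B (Function.update w N a) = B w := by
      intro w a
      apply balAux_congr
      intro τ hτ
      funext j
      have hτN : τ ≠ N := by
        intro h; rw [h] at hτ; simp [hNdef] at hτ
      simp only [blend]
      by_cases hc : t < τ ∧ j = i
      · rw [if_pos hc, if_pos hc, Function.update_of_ne hτN]
      · rw [if_neg hc, if_neg hc]
    have hblendN : ∀ w : Fin T → ℝ, blend i t η w N = Function.update (η N) i (w N) := by
      intro w; funext j
      rcases eq_or_ne j i with rfl | hj
      · simp [blend, Function.update_self, htN]
      · simp only [blend, Function.update_of_ne hj]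
        rw [if_neg (by tauto)]
    have hbal1 : ∀ w : Fin T → ℝ,
        balAux buB (blend i t η w) (n + 1)
          = buB N (Function.update (η N) i (w N)) (B w) := by
      intro w
      simp only [balAux, hB]
      rw [dif_pos hnT, hblendN w]
    have hfil : univ.filter (fun τ : Fin T => n ≤ (τ : ℕ))
        = insert N (univ.filter (fun τ : Fin T => n + 1 ≤ (τ : ℕ))) := by
      ext τ
      simp only [mem_filter, mem_insert, mem_univ, true_and]
      constructor
      · intro h
        rcases eq_or_lt_of_le h with h' | h'
        · left; exact (Fin.ext h'.symm : τ = N).symm ▸ rfl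
        · right; omega
      · rintro (rfl | h)
        · exact le_refl _
        · omega
    have hnotin : N ∉ univ.filter (fun τ : Fin T => n + 1 ≤ (τ : ℕ)) := by
      simp [hNdef]
    have hg : ∀ s a w, g s (Function.update w N a) = g s w := by
      intro s a w
      simp only [hgdef, hBupd]
    calc
      ∑ w ∈ buyerSeqs S i, buyerProb S i w *
          ∑ τ ∈ univ.filter (fun τ : Fin T => n ≤ (τ : ℕ)), util x p i τ (w τ) (blend i t η w)
        = ∑ w ∈ buyerSeqs S i,
            (buyerProb S i w * util x p i N (w N) (blend i t η w)
              + buyerProb S i w *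
                ∑ τ ∈ univ.filter (fun τ : Fin T => n + 1 ≤ (τ : ℕ)),
                  util x p i τ (w τ) (blend i t η w)) := by
          refine Finset.sum_congr rfl fun w _ => ?_
          rw [hfil, Finset.sum_insert hnotin, mul_add]
      _ = (∑ w ∈ buyerSeqs S i, buyerProb S i w * util x p i N (w N) (blend i t η w))
            + ∑ w ∈ buyerSeqs S i, buyerProb S i w *
                Fc S xB pB buB i η m (n + 1) (balAux buB (blend i t η w) (n + 1)) := by
          rw [Finset.sum_add_distrib, ih (n + 1) (by omega) (by omega)]
      _ = ∑ w ∈ buyerSeqs S i, buyerProb S i w * g (w N) w := by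
          rw [← Finset.sum_add_distrib]
          refine Finset.sum_congr rfl fun w _ => ?_
          rw [← mul_add]
          congr 1
          have hu : util x p i N (w N) (blend i t η w)
              = w N * xB N (Function.update (η N) i (w N)) (B w) i
                - pB N (Function.update (η N) i (w N)) (B w) i := by
            simp only [util, hx, hp, induced, hblendN w, hB]
            rfl
          rw [hu, hbal1 w, hgdef]
      _ = ∑ w ∈ buyerSeqs S i, buyerProb S i w * ∑ s ∈ S.V i N, S.f i N s * g s w :=
          (resample S i N g hg).symm
      _ = ∑ w ∈ buyerSeqs S i, buyerProb S i w *
            Fc S xB pB buB i η (m + 1) n (balAux buB (blend i t η w) n) := by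
          refine Finset.sum_congr rfl fun w _ => ?_
          congr 1
          simp only [Fc]
          rw [dif_pos hnT]

/-- The dynamic mechanism induced by any bank account mechanism
satisfying (IC), (BI), and (BU) is dynamic incentive compatible (DIC) and
ex-post individually rational (eP-IR). -/
theorem induced_bank_account_mechanism_DIC_and_EPIR
    (k T : ℕ) (hk : 1 ≤ k) (hT : 1 ≤ T) (S : Setting k T)
    (xB pB buB : BankMap k T)
    (hfeas : BankFeasible S xB)
    (hIC : BankIC S xB pB) (hBI : BankBI S xB pB) (hBU : BankBU S xB pB buB) :
    DIC S (induced xB buB) (induced pB buB) ∧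
    EPIR S (induced xB buB) (induced pB buB) := by
  constructor
  · -- DIC
    intro vhat hvhat i t vi hvi r hr
    have hbal_eq : ∀ s : ℝ,
        balAux buB (replace vhat i t s) (t : ℕ) = balAux buB vhat (t : ℕ) := by
      intro s
      apply balAux_congr
      intro τ hτ
      funext j
      simp only [replace]
      rw [if_neg]
      rintro ⟨rfl, -⟩
      omega
    have hrep_t : ∀ s : ℝ, (replace vhat i t s) t = Function.update (vhat t) i s := by
      intro s
      funext j
      simp only [replace, Function.update_apply]
      by_cases hj : j = i <;> simp [hj]
    have hb0 : NonnegBal (balAux buB vhat (t : ℕ)) :=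
      balAux_nonneg S xB pB buB hBU vhat hvhat (t : ℕ)
    have hBv : BValid S t (Function.update (vhat t) i vi) := by
      intro j
      rcases eq_or_ne j i with rfl | hj
      · simpa using hvi
      · rw [Function.update_of_ne hj]; exact hvhat t j
    have hut : util (induced xB buB) (induced pB buB) i t vi (replace vhat i t r)
        ≤ util (induced xB buB) (induced pB buB) i t vi (replace vhat i t vi) := by
      have h := hIC t _ hb0 (Function.update (vhat t) i vi) hBv i r hr
      simp only [util, induced, hrep_t, hbal_eq]
      simpa [Function.update_idem, Function.update_self] using h
    have htT : (t : ℕ) < T := t.isLt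
    have hfilter : (univ.filter (fun τ : Fin T => t < τ))
        = univ.filter (fun τ : Fin T => (t : ℕ) + 1 ≤ (τ : ℕ)) := by
      ext τ
      simp only [mem_filter, mem_univ, true_and, Fin.lt_def]
      omega
    have hagree : ∀ (τ : Fin T) (j : Fin k), j ≠ i →
        (replace vhat i t r) τ j = (replace vhat i t vi) τ j := by
      intro τ j hj
      simp only [replace]
      rw [if_neg (by tauto), if_neg (by tauto)]
    have hvalη : ∀ τ : Fin T, (t : ℕ) + 1 ≤ (τ : ℕ) → ∀ j, j ≠ i →
        (replace vhat i t vi) τ j ∈ S.V j τ := by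
      intro τ _ j _
      exact replace_valid S hvhat hvi τ j
    have hcu : contUtil S (induced xB buB) (induced pB buB) i t (replace vhat i t r)
        = contUtil S (induced xB buB) (induced pB buB) i t (replace vhat i t vi) := by
      have keyr := key S xB pB buB i t (replace vhat i t r)
        (T - ((t : ℕ) + 1)) ((t : ℕ) + 1) (by omega) (by omega)
      have keyv := key S xB pB buB i t (replace vhat i t vi)
        (T - ((t : ℕ) + 1)) ((t : ℕ) + 1) (by omega) (by omega)
      rw [contUtil, contUtil]
      simp only [hfilter]
      rw [keyr, keyv]
      refine Finset.sum_congr rfl fun w hw => ?_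
      congr 1
      rw [Fc_eta_congr S xB pB buB i _ _ hagree]
      exact Fc_balInd S xB pB buB hBI hBU i (replace vhat i t vi)
        (T - ((t : ℕ) + 1)) ((t : ℕ) + 1) hvalη _ _
        (balAux_nonneg S xB pB buB hBU _
          (blend_valid S (replace_valid S hvhat hr) hw) _)
        (balAux_nonneg S xB pB buB hBU _
          (blend_valid S (replace_valid S hvhat hvi) hw) _)
    linarith
  · -- EPIR
    intro v hv i
    have hbn := balAux_nonneg S xB pB buB hBU v hv
    have main : ∀ n, n ≤ T →
        balAux buB v n i ≤ ∑ τ ∈ univ.filter (fun τ : Fin T => (τ : ℕ) < n),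
          util (induced xB buB) (induced pB buB) i τ (v τ i) v := by
      intro n
      induction n with
      | zero =>
        intro _
        have : univ.filter (fun τ : Fin T => (τ : ℕ) < 0) = ∅ :=
          Finset.filter_false_of_mem (fun τ _ => by omega)
        simp [this, balAux]
      | succ n ih =>
        intro hn
        have hnT : n < T := hn
        have hfil : univ.filter (fun τ : Fin T => (τ : ℕ) < n + 1)
            = insert (⟨n, hnT⟩ : Fin T) (univ.filter (fun τ : Fin T => (τ : ℕ) < n)) := by
          ext τ
          simp only [mem_filter, mem_insert, mem_univ, true_and]
          constructor
          · intro h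
            rcases Nat.lt_succ_iff_lt_or_eq.mp h with h' | h'
            · right; exact h'
            · left; exact Fin.ext h'
          · rintro (rfl | h)
            · simp
            · omega
        have hnotin : (⟨n, hnT⟩ : Fin T) ∉ univ.filter (fun τ : Fin T => (τ : ℕ) < n) := by
          simp
        rw [hfil, Finset.sum_insert hnotin]
        have hbu := (hBU ⟨n, hnT⟩ (balAux buB v n) (hbn n) (v ⟨n, hnT⟩)
          (fun j => hv ⟨n, hnT⟩ j) i).2
        have hstep : balAux buB v (n + 1) i = buB ⟨n, hnT⟩ (v ⟨n, hnT⟩) (balAux buB v n) i := by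
          simp only [balAux]
          rw [dif_pos hnT]
        have hu : util (induced xB buB) (induced pB buB) i ⟨n, hnT⟩ (v ⟨n, hnT⟩ i) v
            = v ⟨n, hnT⟩ i * xB ⟨n, hnT⟩ (v ⟨n, hnT⟩) (balAux buB v n) i
              - pB ⟨n, hnT⟩ (v ⟨n, hnT⟩) (balAux buB v n) i := rfl
        have hihn := ih (le_of_lt hnT)
        rw [hstep, hu]
        linarith
    have h2 := main T le_rfl
    have h3 : univ.filter (fun τ : Fin T => (τ : ℕ) < T) = univ := by
      apply Finset.filter_true_of_mem
      intro τ _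
      exact τ.isLt
    rw [h3] at h2
    exact le_trans (hbn T i) h2

end DynAuction
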